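/- If u is a nontrivial universal partial cycle for A^n (i.e., u contains at least one diamond and at least one non-diamond character), then the length of u is strictly greater than n. -/

import Mathlib

/-- The window of length `n` of the cyclic partial word `u` starting at position `i`
covers the total word `w : Fin n → Fin a`: at each position `u` is a diamond (`none`)
or agrees with `w`. -/
def Covers (a n : ℕ) (u : ℕ → Option (Fin a)) (i : ℕ) (w : Fin n → Fin a) : Prop :=
  ∀ j : Fin n, u (i + (j : ℕ)) = none ∨ u (i + (j : ℕ)) = some (w j)

/-- `u`, viewed as a cyclic partial word of length `N` (an `N`-periodic function
`ℕ → Option (Fin a)`), is a universal partial cycle for `(Fin a)^n`: each total word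
of length `n` is covered by exactly one of the `N` cyclic windows. -/
def IsUpcycle (a n N : ℕ) (u : ℕ → Option (Fin a)) : Prop :=
  (∀ i, u (i + N) = u i) ∧ ∀ w : Fin n → Fin a, ∃! i : Fin N, Covers a n u (i : ℕ) w

lemma upcycle_mod {α : Type*} (N : ℕ) (u : ℕ → α) (h : ∀ i, u (i + N) = u i) :
    ∀ x, u x = u (x % N) := by
  rcases Nat.eq_zero_or_pos N with h0 | h0
  · subst h0; intro x; rw [Nat.mod_zero]
  intro x
  induction x using Nat.strong_induction_on with
  | _ x ih =>
    by_cases hx : x < N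
    · rw [Nat.mod_eq_of_lt hx]
    · push_neg at hx
      obtain ⟨k, rfl⟩ := Nat.exists_eq_add_of_le hx
      have h1 : u (N + k) = u k := by rw [Nat.add_comm]; exact h k
      rw [h1, ih k (by omega), Nat.add_mod_left]

/-- A nontrivial upcycle (one containing at least one diamond and at least one letter)
has length strictly greater than `n`. -/
theorem nontrivial_upcycle_length (a n N : ℕ) (ha : 2 ≤ a)
    (u : ℕ → Option (Fin a)) (hu : IsUpcycle a n N u)
    (hdiam : ∃ i, u i = none) (hletter : ∃ i, u i ≠ none) :
    n < N := by
  by_contra hle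
  push_neg at hle  -- N ≤ n
  obtain ⟨hper, hcov⟩ := hu
  have hmod := upcycle_mod N u hper
  have hN : 0 < N := by
    obtain ⟨i, -, -⟩ := hcov (fun _ => ⟨0, by omega⟩)
    have := i.2; omega
  obtain ⟨i₀, hi₀⟩ := hletter
  obtain ⟨c, hc⟩ : ∃ c, u i₀ = some c := Option.ne_none_iff_exists'.mp hi₀
  have : Nontrivial (Fin a) := Fin.nontrivial_iff_two_le.mpr ha
  obtain ⟨c', hc'⟩ := exists_ne c
  obtain ⟨s, hs, -⟩ := hcov (fun _ => c')
  set r : ℕ := (s : ℕ) % N with hr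
  set j : ℕ := (i₀ + (N - r)) % N with hj
  have hjN : j < N := Nat.mod_lt _ hN
  have hjn : j < n := lt_of_lt_of_le hjN hle
  have hdm : N * ((s : ℕ) / N) + r = (s : ℕ) := by
    rw [hr]; exact Nat.div_add_mod _ _
  have hrN : r < N := Nat.mod_lt _ hN
  have hkey : ((s : ℕ) + j) % N = i₀ % N := by
    rw [hj, Nat.add_mod_mod]
    have hmul : ((s : ℕ) / N + 1) * N = N * ((s : ℕ) / N) + N := by ring
    have heq : (s : ℕ) + (i₀ + (N - r)) = i₀ + ((s : ℕ) / N + 1) * N := by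
      rw [hmul]; omega
    rw [heq, Nat.add_mul_mod_self_right]
  have huval : u ((s : ℕ) + j) = some c := by
    rw [hmod ((s : ℕ) + j), hkey, ← hmod i₀, hc]
  rcases hs ⟨j, hjn⟩ with h1 | h1
  · rw [huval] at h1; exact Option.some_ne_none c h1
  · rw [huval] at h1
    simp only [Option.some.injEq] at h1
    exact hc' h1.symm
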